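/- Let K : ℝ → ℝ be a kernel function: nonnegative, bounded, measurable, symmetric (K(−u) = K(u) for all u), supported in [−1,1], with ∫_ℝ K(u) du = 1, and write κ_q = ∫_{u>0} u^q K(u) du. Let c ∈ ℝ, δ > 0, M ≥ 0, and let p : ℝ × ℝ → ℝ be a nonnegative function that is twice continuously differentiable on [c, c+δ] × ℝ (one-sided in the first argument at c) with all second-order partial derivatives bounded in absolute value by M there. Then for every z ∈ ℝ and every h with 0 < h < δ: |(2/h²) ∫_{(c,∞)} ∫_ℝ K((x−c)/h) K((z−w)/h) p(x,w) dw dx − p(c,z) − 2 κ_1 h ∂_x p(c,z)| ≤ M (2κ_2 + 4κ_1²) h², where ∂_x p(c,z) is the right partial derivative of p in its first argument at (c,z). -/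

import Mathlib

set_option maxHeartbeats 1000000


open MeasureTheory

namespace Stmt13Aux

/-- Integrability from measurability + support in `[-1,1]` + bound. -/
lemma integrable_aux {f : ℝ → ℝ} (hm : AEStronglyMeasurable f (volume : Measure ℝ))
    {C : ℝ} (hsupp : ∀ v, v ∉ Set.Icc (-1 : ℝ) 1 → f v = 0)
    (hb : ∀ v ∈ Set.Icc (-1 : ℝ) 1, |f v| ≤ C) : Integrable f := by
  have hind : Integrable ((Set.Icc (-1 : ℝ) 1).indicator (fun _ => C)) := by
    rw [integrable_indicator_iff measurableSet_Icc]
    exact integrableOn_const measure_Icc_lt_top.ne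
  refine hind.mono' hm (Filter.Eventually.of_forall fun v => ?_)
  by_cases hv : v ∈ Set.Icc (-1 : ℝ) 1
  · rw [Set.indicator_of_mem hv, Real.norm_eq_abs]
    exact hb v hv
  · rw [Set.indicator_of_notMem hv, Real.norm_eq_abs, hsupp v hv, abs_zero]

lemma abs_int (y : ℝ) : (∫ t in (0 : ℝ)..y, |t|) = y * |y| / 2 := by
  rcases le_or_gt 0 y with hy | hy
  · rw [intervalIntegral.integral_congr (g := fun t => t)
      (fun t ht => by
        rw [Set.uIcc_of_le hy] at ht
        exact abs_of_nonneg ht.1),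
      integral_id, abs_of_nonneg hy]
    ring
  · rw [intervalIntegral.integral_congr (g := fun t => -t)
      (fun t ht => by
        rw [Set.uIcc_of_ge hy.le] at ht
        exact abs_of_nonpos ht.2),
      intervalIntegral.integral_neg, integral_id, abs_of_neg hy]
    ring

/-- Quantitative first order Taylor estimate on a convex set, two-sided. -/
lemma taylor_aux {f f' f'' : ℝ → ℝ} {s : Set ℝ} (hs : Convex ℝ s) {M : ℝ}
    (hd1 : ∀ t ∈ s, HasDerivWithinAt f (f' t) s t)
    (hd2 : ∀ t ∈ s, HasDerivWithinAt f' (f'' t) s t)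
    (hbd : ∀ t ∈ s, |f'' t| ≤ M)
    {a x : ℝ} (ha : a ∈ s) (hx : x ∈ s) :
    |f x - f a - (x - a) * f' a| ≤ M / 2 * (x - a) ^ 2 := by
  have hM : 0 ≤ M := by
    have := hbd a ha
    have := abs_nonneg (f'' a)
    linarith
  have huIcc : Set.uIcc a x ⊆ s := hs.ordConnected.uIcc_subset ha hx
  have hlip : ∀ t ∈ s, |f' t - f' a| ≤ M * |t - a| := by
    intro t ht
    have := hs.norm_image_sub_le_of_norm_hasDerivWithin_le hd2
      (fun y hy => by rw [Real.norm_eq_abs]; exact hbd y hy) ha ht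
    simpa [Real.norm_eq_abs] using this
  have hcontf : ContinuousOn f (Set.uIcc a x) :=
    fun t ht => ((hd1 t (huIcc ht)).continuousWithinAt).mono huIcc
  have hcontf' : ContinuousOn f' (Set.uIcc a x) :=
    fun t ht => ((hd2 t (huIcc ht)).continuousWithinAt).mono huIcc
  have hint : IntervalIntegrable f' volume a x := hcontf'.intervalIntegrable
  have hIoo : Set.Ioo (min a x) (max a x) ⊆ s := fun y hy =>
    huIcc (Set.Ioo_subset_Icc_self hy)
  have hderiv : ∀ t ∈ Set.Ioo (min a x) (max a x), HasDerivWithinAt f (f' t) (Set.Ioi t) t := by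
    intro t ht
    have hts : t ∈ s := hIoo ht
    have hsnhds : s ∈ nhds t := mem_nhds_iff.2 ⟨Set.Ioo (min a x) (max a x), hIoo, isOpen_Ioo, ht⟩
    exact ((hd1 t hts).hasDerivAt hsnhds).hasDerivWithinAt
  have hftc : (∫ t in a..x, f' t) = f x - f a :=
    intervalIntegral.integral_eq_sub_of_hasDeriv_right hcontf hderiv hint
  have key : f x - f a - (x - a) * f' a = ∫ t in a..x, (f' t - f' a) := by
    rw [intervalIntegral.integral_sub hint intervalIntegrable_const, hftc,
      intervalIntegral.integral_const, smul_eq_mul]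
    all_goals ring
  have hboundInt : IntervalIntegrable (fun t => M * |t - a|) volume a x :=
    Continuous.intervalIntegrable (by continuity) a x
  have h1 : ‖∫ t in a..x, (f' t - f' a)‖ ≤ abs (∫ t in a..x, M * |t - a|) := by
    refine intervalIntegral.norm_integral_le_abs_of_norm_le ?_ hboundInt
    refine (ae_restrict_iff' measurableSet_uIoc).2 (Filter.Eventually.of_forall fun t ht => ?_)
    rw [Real.norm_eq_abs]
    exact hlip t (huIcc (Set.uIoc_subset_uIcc ht))
  have h2 : abs (∫ t in a..x, M * |t - a|) = M / 2 * (x - a) ^ 2 := by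
    have h3 : (∫ t in a..x, |t - a|) = ∫ t in (a - a)..(x - a), |t| :=
      (intervalIntegral.integral_comp_sub_right (fun t => |t|) a)
    rw [intervalIntegral.integral_const_mul, h3, sub_self, abs_int, abs_mul]
    rw [abs_of_nonneg hM]
    have : |(x - a) * |x - a| / 2| = (x - a) ^ 2 / 2 := by
      rw [abs_div, abs_mul, abs_abs]
      rw [abs_of_nonneg (by norm_num : (0:ℝ) ≤ 2)]
      rw [← sq_abs]
      ring
    rw [this]
    ring
  rw [key, ← Real.norm_eq_abs]
  exact h1.trans (le_of_eq h2)

/-- Derivatives of an affine slice of a `C²` function on a product set. -/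
lemma slice_aux {Q : ℝ × ℝ → ℝ} {S : Set (ℝ × ℝ)} (hS : UniqueDiffOn ℝ S)
    (hQ : ContDiffOn ℝ 2 Q S) {M : ℝ}
    (hbd : ∀ y ∈ S, ‖iteratedFDerivWithin ℝ 2 Q S y‖ ≤ M)
    {ι : ℝ → ℝ × ℝ} {e : ℝ × ℝ} (hι : ∀ t, HasDerivAt ι e t) (he : ‖e‖ ≤ 1)
    {s' : Set ℝ} (hmap : Set.MapsTo ι s' S) :
    (∀ t ∈ s', HasDerivWithinAt (fun u => Q (ι u)) (fderivWithin ℝ Q S (ι t) e) s' t) ∧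
    (∀ t ∈ s', HasDerivWithinAt (fun u => fderivWithin ℝ Q S (ι u) e)
        (fderivWithin ℝ (fderivWithin ℝ Q S) S (ι t) e e) s' t) ∧
    (∀ t ∈ s', |fderivWithin ℝ (fderivWithin ℝ Q S) S (ι t) e e| ≤ M) := by
  have hQd : DifferentiableOn ℝ Q S := hQ.differentiableOn (by norm_num)
  have hF : ContDiffOn ℝ 1 (fderivWithin ℝ Q S) S := hQ.fderivWithin hS (by norm_num)
  have hFd : DifferentiableOn ℝ (fderivWithin ℝ Q S) S := hF.differentiableOn (by norm_num)
  refine ⟨fun t ht => ?_, fun t ht => ?_, fun t ht => ?_⟩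
  · exact (hQd _ (hmap ht)).hasFDerivWithinAt.comp_hasDerivWithinAt t
      (hι t).hasDerivWithinAt hmap
  · have h1 : HasDerivWithinAt (fun u => fderivWithin ℝ Q S (ι u))
        (fderivWithin ℝ (fderivWithin ℝ Q S) S (ι t) e) s' t :=
      (hFd _ (hmap ht)).hasFDerivWithinAt.comp_hasDerivWithinAt t
        (hι t).hasDerivWithinAt hmap
    exact (ContinuousLinearMap.apply ℝ ℝ e).hasFDerivAt.comp_hasDerivWithinAt t h1
  · have hM : 0 ≤ M := le_trans (norm_nonneg _) (hbd _ (hmap ht))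
    have h3 := iteratedFDerivWithin_two_apply Q hS (hmap ht) ![e, e]
    have hTnorm := (iteratedFDerivWithin ℝ 2 Q S (ι t)).le_opNorm ![e, e]
    have hprod : (∏ i, ‖(![e, e] : Fin 2 → ℝ × ℝ) i‖) = ‖e‖ * ‖e‖ := by
      rw [Fin.prod_univ_two]
      simp
    rw [hprod] at hTnorm
    have hee : ‖e‖ * ‖e‖ ≤ 1 := by nlinarith [norm_nonneg e]
    calc |fderivWithin ℝ (fderivWithin ℝ Q S) S (ι t) e e|
        = ‖iteratedFDerivWithin ℝ 2 Q S (ι t) ![e, e]‖ := by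
          rw [h3]; simp [Real.norm_eq_abs]
      _ ≤ ‖iteratedFDerivWithin ℝ 2 Q S (ι t)‖ * (‖e‖ * ‖e‖) := hTnorm
      _ ≤ M * 1 := mul_le_mul (hbd _ (hmap ht)) hee (by positivity) hM
      _ = M := mul_one M

lemma half_aux {g : ℝ → ℝ} (hsym : ∀ u, g (-u) = g u) :
    (∫ u in Set.Iic (0 : ℝ), g u) = ∫ u in Set.Ioi (0 : ℝ), g u := by
  have h := integral_comp_neg_Ioi (0 : ℝ) g
  rw [neg_zero] at h
  rw [← h]
  simp only [hsym]

lemma odd_aux {g : ℝ → ℝ} (hg : Integrable g) (hodd : ∀ u, g (-u) = -g u) :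
    (∫ u, g u) = 0 := by
  have h1 : (∫ u in Set.Iic (0 : ℝ), g u) = - ∫ u in Set.Ioi (0 : ℝ), g u := by
    have h := integral_comp_neg_Ioi (0 : ℝ) g
    rw [neg_zero] at h
    rw [← h]
    simp only [hodd]
    exact integral_neg g
  have hsplit := intervalIntegral.integral_Iic_add_Ioi (b := (0 : ℝ)) hg.integrableOn hg.integrableOn
  rw [h1] at hsplit
  linarith [hsplit]

lemma even_aux {g : ℝ → ℝ} (hg : Integrable g) (hsym : ∀ u, g (-u) = g u) :
    (∫ u, g u) = 2 * ∫ u in Set.Ioi (0 : ℝ), g u := by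
  have hsplit := intervalIntegral.integral_Iic_add_Ioi (b := (0 : ℝ)) hg.integrableOn hg.integrableOn
  rw [half_aux hsym] at hsplit
  linarith [hsplit]

lemma shift_aux (f : ℝ → ℝ) (c : ℝ) :
    (∫ x in Set.Ioi c, f (x - c)) = ∫ x in Set.Ioi (0 : ℝ), f x := by
  rw [← integral_indicator measurableSet_Ioi, ← integral_indicator measurableSet_Ioi]
  have hpt : ∀ x, (Set.Ioi c).indicator (fun y => f (y - c)) x
      = (Set.Ioi (0 : ℝ)).indicator f (x - c) := by
    intro x
    by_cases hx : x ∈ Set.Ioi c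
    · rw [Set.indicator_of_mem hx, Set.indicator_of_mem (by simpa [sub_pos] using hx)]
    · rw [Set.indicator_of_notMem hx, Set.indicator_of_notMem (by simpa [sub_pos] using hx)]
  simp only [hpt]
  exact integral_sub_right_eq_self ((Set.Ioi (0 : ℝ)).indicator f) c

end Stmt13Aux

open Stmt13Aux

/-- Lemma A.2, second claim: the one-sided bivariate kernel smooth of a joint density at
the boundary point (c,z) equals p(c,z) + 2κ₁h ∂ₓp(c,z) + O(h²). -/
theorem stmt13 (K : ℝ → ℝ)
    (hKnn : ∀ u, 0 ≤ K u) (hKbdd : ∃ B, ∀ u, K u ≤ B) (hKmeas : Measurable K)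
    (hKsymm : ∀ u, K (-u) = K u) (hKsupp : ∀ u, u ∉ Set.Icc (-1 : ℝ) 1 → K u = 0)
    (hKone : (∫ u, K u) = 1)
    (c δ M : ℝ) (hδ : 0 < δ) (hM : 0 ≤ M)
    (p : ℝ → ℝ → ℝ) (hpnn : ∀ x z, 0 ≤ p x z)
    (hpC2 : ContDiffOn ℝ 2 (Function.uncurry p)
      (Set.Icc c (c + δ) ×ˢ (Set.univ : Set ℝ)))
    (hbd : ∀ q ∈ Set.Icc c (c + δ) ×ˢ (Set.univ : Set ℝ),
      ‖iteratedFDerivWithin ℝ 2 (Function.uncurry p)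
        (Set.Icc c (c + δ) ×ˢ (Set.univ : Set ℝ)) q‖ ≤ M) :
    ∀ (z h : ℝ), 0 < h → h < δ →
      |(2 / h ^ 2) * (∫ x in Set.Ioi c, ∫ w, K ((x - c) / h) * K ((z - w) / h) * p x w)
          - p c z
          - 2 * (∫ u in Set.Ioi (0 : ℝ), u * K u) * h
              * derivWithin (fun x => p x z) (Set.Icc c (c + δ)) c|
        ≤ M * (2 * (∫ u in Set.Ioi (0 : ℝ), u ^ 2 * K u)
            + 4 * (∫ u in Set.Ioi (0 : ℝ), u * K u) ^ 2) * h ^ 2 := by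
  intro z h hh hhδ
  obtain ⟨B, hB⟩ := hKbdd
  have hB0 : 0 ≤ B := le_trans (hKnn 0) (hB 0)
  have hcL : c < c + δ := by linarith
  set s : Set ℝ := Set.Icc c (c + δ) with hs
  set S : Set (ℝ × ℝ) := s ×ˢ (Set.univ : Set ℝ) with hSdef
  have hsu : UniqueDiffOn ℝ s := uniqueDiffOn_Icc hcL
  have hSu : UniqueDiffOn ℝ S := hsu.prod uniqueDiffOn_univ
  have hcs : c ∈ s := ⟨le_refl c, by linarith⟩
  -- the clamping map and globally continuous modification q of p
  set π : ℝ → ℝ := fun x => max c (min x (c + δ)) with hπdef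
  have hπcont : Continuous π := continuous_const.max (continuous_id.min continuous_const)
  have hπmem : ∀ x, π x ∈ s := fun x => ⟨le_max_left _ _, max_le hcL.le (min_le_right _ _)⟩
  have hπeq : ∀ x ∈ s, π x = x := fun x hx => by
    rw [hπdef]
    simp only
    rw [min_eq_left hx.2, max_eq_right hx.1]
  set q : ℝ → ℝ → ℝ := fun x w => p (π x) w with hqdef
  set Q : ℝ × ℝ → ℝ := Function.uncurry q with hQdef
  have hqp : ∀ x ∈ s, ∀ w, q x w = p x w := fun x hx w => by
    rw [hqdef]; simp only; rw [hπeq x hx]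
  have hQeq : Set.EqOn Q (Function.uncurry p) S := fun y hy => by
    have := hqp y.1 hy.1 y.2
    simpa [hQdef, Function.uncurry] using this
  have hQC2 : ContDiffOn ℝ 2 Q S := hpC2.congr hQeq
  have hQcont : Continuous Q := by
    have hQ2 : Q = Function.uncurry p ∘ (fun y : ℝ × ℝ => (π y.1, y.2)) := rfl
    rw [hQ2]
    exact hpC2.continuousOn.comp_continuous
      ((hπcont.comp continuous_fst).prodMk continuous_snd) (fun y => ⟨hπmem y.1, trivial⟩)
  have hbdQ : ∀ y ∈ S, ‖iteratedFDerivWithin ℝ 2 Q S y‖ ≤ M := fun y hy => by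
    rw [iteratedFDerivWithin_congr hQeq hy 2]
    exact hbd y hy
  -- slices
  have he₁n : ‖((1 : ℝ), (0 : ℝ))‖ ≤ 1 := by
    rw [Prod.norm_def]
    simp
  have he₂n : ‖((0 : ℝ), (1 : ℝ))‖ ≤ 1 := by
    rw [Prod.norm_def]
    simp
  have hι₁ : ∀ t : ℝ, HasDerivAt (fun t : ℝ => ((t, z) : ℝ × ℝ)) ((1 : ℝ), (0 : ℝ)) t :=
    fun t => (hasDerivAt_id t).prodMk (hasDerivAt_const t z)
  have hmap₁ : Set.MapsTo (fun t : ℝ => ((t, z) : ℝ × ℝ)) s S := fun t ht => ⟨ht, trivial⟩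
  obtain ⟨hX1, hX2, hX3⟩ := slice_aux hSu hQC2 hbdQ hι₁ he₁n hmap₁
  -- the slope d
  set d : ℝ := fderivWithin ℝ Q S (c, z) ((1 : ℝ), (0 : ℝ)) with hddef
  have hpslice : HasDerivWithinAt (fun x => p x z) d s c := by
    refine (hX1 c hcs).congr (fun y hy => (hqp y hy z).symm) (hqp c hcs z).symm
  have hdW : derivWithin (fun x => p x z) s c = d := hpslice.derivWithin (hsu c hcs)
  -- kernel integrals
  have hKint : Integrable K := integrable_aux hKmeas.aestronglyMeasurable hKsupp
    (fun v _ => by rw [abs_of_nonneg (hKnn v)]; exact hB v)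
  have hvKint : Integrable (fun v => v * K v) :=
    integrable_aux (measurable_id.mul hKmeas).aestronglyMeasurable
      (fun v hv => by rw [hKsupp v hv, mul_zero])
      (fun v hv => by
        rw [abs_mul, abs_of_nonneg (hKnn v)]
        have h1 : |v| ≤ 1 := abs_le.2 ⟨hv.1, hv.2⟩
        calc |v| * K v ≤ 1 * B := by
              exact mul_le_mul h1 (hB v) (hKnn v) one_pos.le
          _ = B := one_mul B)
  have hv2Kint : Integrable (fun v => v ^ 2 * K v) :=
    integrable_aux ((measurable_id.pow_const 2).mul hKmeas).aestronglyMeasurable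
      (fun v hv => by rw [hKsupp v hv, mul_zero])
      (fun v hv => by
        rw [abs_mul, abs_of_nonneg (hKnn v)]
        have h1 : |v| ≤ 1 := abs_le.2 ⟨hv.1, hv.2⟩
        have h2 : |v ^ 2| ≤ 1 := by
          rw [abs_pow]
          calc |v| ^ 2 ≤ 1 ^ 2 := pow_le_pow_left₀ (abs_nonneg v) h1 2
            _ = 1 := one_pow 2
        calc |v ^ 2| * K v ≤ 1 * B :=
              mul_le_mul h2 (hB v) (hKnn v) one_pos.le
          _ = B := one_mul B)
  set κ₁ : ℝ := ∫ u in Set.Ioi (0 : ℝ), u * K u with hκ₁def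
  set κ₂ : ℝ := ∫ u in Set.Ioi (0 : ℝ), u ^ 2 * K u with hκ₂def
  have hKhalf : (∫ u in Set.Ioi (0 : ℝ), K u) = 1 / 2 := by
    have hsplit := intervalIntegral.integral_Iic_add_Ioi (b := (0 : ℝ)) hKint.integrableOn hKint.integrableOn
    rw [half_aux hKsymm, hKone] at hsplit
    linarith
  have hvK0 : (∫ v, v * K v) = 0 :=
    odd_aux hvKint (fun v => by rw [hKsymm]; ring)
  have hv2K : (∫ v, v ^ 2 * K v) = 2 * κ₂ :=
    even_aux hv2Kint (fun v => by rw [hKsymm]; ring)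
  have hκ₂nn : 0 ≤ κ₂ := setIntegral_nonneg measurableSet_Ioi
    (fun v _ => mul_nonneg (sq_nonneg v) (hKnn v))
  -- inner smoothed function
  set J2 : ℝ → ℝ := fun x => ∫ v, K v * q x (z - h * v) with hJ2def
  have hqxcont : ∀ x : ℝ, Continuous (fun w => q x w) := fun x =>
    hQcont.comp (continuous_const.prodMk continuous_id)
  have hinner : ∀ x : ℝ, (∫ w, K ((z - w) / h) * q x w) = h * J2 x := by
    intro x
    have hrw : ∀ w : ℝ, K ((z - w) / h) * q x w
        = (fun t => K (t / h) * q x (z - h * (t / h))) (z - w) := by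
      intro w
      simp only
      have : z - h * ((z - w) / h) = w := by field_simp; ring
      rw [this]
    calc (∫ w, K ((z - w) / h) * q x w)
        = ∫ w, (fun t => K (t / h) * q x (z - h * (t / h))) (z - w) := by
          simp only [hrw]
      _ = ∫ t, K (t / h) * q x (z - h * (t / h)) :=
          integral_sub_left_eq_self (fun t => K (t / h) * q x (z - h * (t / h))) volume z
      _ = |h| • ∫ v, K v * q x (z - h * v) :=
          Measure.integral_comp_div (fun v => K v * q x (z - h * v)) h
      _ = h * J2 x := by rw [abs_of_pos hh, smul_eq_mul, hJ2def]
  -- rewrite the double integral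
  have hLHS : (∫ x in Set.Ioi c, ∫ w, K ((x - c) / h) * K ((z - w) / h) * p x w)
      = ∫ x in Set.Ioi c, K ((x - c) / h) * (h * J2 x) := by
    refine setIntegral_congr_fun measurableSet_Ioi (fun x hx => ?_)
    by_cases hxh : x ≤ c + h
    · have hxs : x ∈ s := ⟨le_of_lt hx, by linarith⟩
      calc (∫ w, K ((x - c) / h) * K ((z - w) / h) * p x w)
          = ∫ w, K ((x - c) / h) * (K ((z - w) / h) * q x w) := by
            congr 1
            funext w
            rw [hqp x hxs w]
            ring
        _ = K ((x - c) / h) * ∫ w, K ((z - w) / h) * q x w :=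
            integral_const_mul _ _
        _ = K ((x - c) / h) * (h * J2 x) := by rw [hinner x]
    · have hK0 : K ((x - c) / h) = 0 := by
        refine hKsupp _ (fun hmem => ?_)
        have h1 : (x - c) / h ≤ 1 := hmem.2
        have h2 : x - c ≤ h := by
          have := (div_le_one hh).1 h1
          linarith
        linarith [not_le.1 hxh]
      simp [hK0]
  -- outer substitution
  have hout : (∫ x in Set.Ioi c, K ((x - c) / h) * (h * J2 x))
      = h * ∫ u in Set.Ioi (0 : ℝ), K u * (h * J2 (c + h * u)) := by
    have h1 : ∀ x : ℝ, K ((x - c) / h) * (h * J2 x)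
        = (fun t => K (t / h) * (h * J2 (c + t))) (x - c) := by
      intro x
      simp only
      rw [add_sub_cancel]
    calc (∫ x in Set.Ioi c, K ((x - c) / h) * (h * J2 x))
        = ∫ x in Set.Ioi c, (fun t => K (t / h) * (h * J2 (c + t))) (x - c) := by
          simp only [h1]
      _ = ∫ t in Set.Ioi (0 : ℝ), K (t / h) * (h * J2 (c + t)) :=
          shift_aux (fun t => K (t / h) * (h * J2 (c + t))) c
      _ = ∫ t in Set.Ioi (0 : ℝ), (fun u => K u * (h * J2 (c + h * u))) (h⁻¹ * t) := by
          refine setIntegral_congr_fun measurableSet_Ioi (fun t _ => ?_)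
          simp only
          rw [inv_mul_eq_div, mul_div_cancel₀ _ (ne_of_gt hh)]
      _ = (h⁻¹)⁻¹ • ∫ u in Set.Ioi (h⁻¹ * 0), K u * (h * J2 (c + h * u)) :=
          integral_comp_mul_left_Ioi (fun u => K u * (h * J2 (c + h * u))) 0 (inv_pos.2 hh)
      _ = h * ∫ u in Set.Ioi (0 : ℝ), K u * (h * J2 (c + h * u)) := by
          rw [inv_inv, mul_zero, smul_eq_mul]
  -- continuity of J2
  have hJ2cont : Continuous J2 := by
    rw [continuous_iff_continuousAt]
    intro x₀
    have hR : IsCompact (Set.Icc (x₀ - 1) (x₀ + 1) ×ˢ Set.Icc (z - h) (z + h)) :=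
      (isCompact_Icc).prod isCompact_Icc
    obtain ⟨C, hC⟩ := hR.exists_bound_of_continuousOn hQcont.continuousOn
    refine continuousAt_of_dominated (bound := (Set.Icc (-1 : ℝ) 1).indicator fun _ => B * C)
      (Filter.Eventually.of_forall fun x =>
        (hKmeas.aestronglyMeasurable.mul
          ((hqxcont x).comp (continuous_const.sub (continuous_const.mul continuous_id))
            ).aestronglyMeasurable)) ?_ ?_ ?_
    · have hxball : Set.Icc (x₀ - 1) (x₀ + 1) ∈ nhds x₀ :=
        Icc_mem_nhds (by linarith) (by linarith)
      refine Filter.eventually_iff_exists_mem.2 ⟨_, hxball, fun x hx => ?_⟩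
      refine Filter.Eventually.of_forall fun v => ?_
      by_cases hv : v ∈ Set.Icc (-1 : ℝ) 1
      · rw [Set.indicator_of_mem hv]
        have hzv : z - h * v ∈ Set.Icc (z - h) (z + h) := by
          constructor
          · nlinarith [hv.1, hv.2]
          · nlinarith [hv.1, hv.2]
        have := hC (x, z - h * v) ⟨hx, hzv⟩
        rw [Real.norm_eq_abs, abs_mul]
        have hKvB : |K v| ≤ B := by rw [abs_of_nonneg (hKnn v)]; exact hB v
        have hCnn : 0 ≤ C := le_trans (norm_nonneg _) this
        calc |K v| * |q x (z - h * v)| ≤ B * C := by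
              refine mul_le_mul hKvB ?_ (abs_nonneg _) hB0
              exact (by simpa [Real.norm_eq_abs] using this : |Q (x, z - h * v)| ≤ C)
          _ = _ := rfl
      · rw [Set.indicator_of_notMem hv, hKsupp v hv]
        simp
    · rw [integrable_indicator_iff measurableSet_Icc]
      exact integrableOn_const measure_Icc_lt_top.ne
    · refine Filter.Eventually.of_forall fun v => ?_
      exact (continuous_const.mul
        (hQcont.comp (continuous_id.prodMk continuous_const))).continuousAt
  -- the key pointwise inner Taylor estimate
  have hJ2est : ∀ x ∈ s, |J2 x - q x z| ≤ M * κ₂ * h ^ 2 := by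
    intro x hx
    have hι₂ : ∀ w : ℝ, HasDerivAt (fun w : ℝ => ((x, w) : ℝ × ℝ)) ((0 : ℝ), (1 : ℝ)) w :=
      fun w => (hasDerivAt_const w x).prodMk (hasDerivAt_id w)
    have hmap₂ : Set.MapsTo (fun w : ℝ => ((x, w) : ℝ × ℝ)) Set.univ S :=
      fun w _ => ⟨hx, trivial⟩
    obtain ⟨hW1, hW2, hW3⟩ := slice_aux hSu hQC2 hbdQ hι₂ he₂n hmap₂
    set g' : ℝ := fderivWithin ℝ Q S (x, z) ((0 : ℝ), (1 : ℝ)) with hg'def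
    have htay : ∀ v : ℝ, |q x (z - h * v) - q x z - ((z - h * v) - z)
        * fderivWithin ℝ Q S (x, z) ((0 : ℝ), (1 : ℝ))| ≤ M / 2 * ((z - h * v) - z) ^ 2 :=
      fun v => taylor_aux convex_univ (fun t _ => hW1 t trivial) (fun t _ => hW2 t trivial)
        (fun t _ => hW3 t trivial) trivial trivial
    set Rv : ℝ → ℝ := fun v => q x (z - h * v) - q x z + h * v * g' with hRvdef
    have hRbd : ∀ v, |Rv v| ≤ M / 2 * h ^ 2 * v ^ 2 := by
      intro v
      have h0 := htay v
      have h1 : (z - h * v) - z = -(h * v) := by ring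
      rw [h1] at h0
      calc |Rv v| = |q x (z - h * v) - q x z - (-(h * v)) * g'| := by
            rw [hRvdef]; congr 1; ring
        _ ≤ M / 2 * (-(h * v)) ^ 2 := h0
        _ = M / 2 * h ^ 2 * v ^ 2 := by ring
    have hRcont : Continuous Rv := by
      refine (((hqxcont x).comp (continuous_const.sub (continuous_const.mul continuous_id))
        ).sub continuous_const).add ?_
      exact (continuous_const.mul continuous_id).mul continuous_const
    have hI2 : Integrable (fun v => K v * q x z) := hKint.mul_const _
    have hI3 : Integrable (fun v => K v * (-(h * v) * g')) := by
      have heq : (fun v => K v * (-(h * v) * g')) = fun v => (-h * g') * (v * K v) := by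
        funext v; ring
      rw [heq]
      exact hvKint.const_mul _
    have hI4 : Integrable (fun v => K v * Rv v) :=
      integrable_aux (hKmeas.aestronglyMeasurable.mul hRcont.aestronglyMeasurable)
        (fun v hv => by rw [hKsupp v hv, zero_mul])
        (fun v hv => by
          have h1 : v ^ 2 ≤ 1 := by nlinarith [hv.1, hv.2]
          have h2 : |Rv v| ≤ M / 2 * h ^ 2 := by
            calc |Rv v| ≤ M / 2 * h ^ 2 * v ^ 2 := hRbd v
              _ ≤ M / 2 * h ^ 2 * 1 := by nlinarith [h1, mul_nonneg hM (sq_nonneg h)]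
              _ = M / 2 * h ^ 2 := mul_one _
          rw [abs_mul, abs_of_nonneg (hKnn v)]
          calc K v * |Rv v| ≤ B * (M / 2 * h ^ 2) :=
                mul_le_mul (hB v) h2 (abs_nonneg _) hB0
            _ = B * (M / 2 * h ^ 2) := rfl)
    have hI23 : Integrable (fun v => K v * q x z + K v * (-(h * v) * g')) := hI2.add hI3
    have hI1 : Integrable (fun v => K v * q x (z - h * v)) := by
      have heq : (fun v => K v * q x (z - h * v))
          = fun v => K v * q x z + K v * (-(h * v) * g') + K v * Rv v := by
        funext v
        rw [hRvdef]
        ring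
      rw [heq]
      exact hI23.add hI4
    have hJ2x : J2 x = q x z + ∫ v, K v * Rv v := by
      have heq : (fun v => K v * q x (z - h * v))
          = fun v => K v * q x z + K v * (-(h * v) * g') + K v * Rv v := by
        funext v
        rw [hRvdef]
        ring
      rw [hJ2def]
      simp only
      rw [heq, integral_add hI23 hI4, integral_add hI2 hI3]
      have e1 : (∫ v, K v * q x z) = q x z := by
        rw [integral_mul_const, hKone, one_mul]
      have e2 : (∫ v, K v * (-(h * v) * g')) = 0 := by
        have heq2 : (fun v => K v * (-(h * v) * g')) = fun v => (-h * g') * (v * K v) := by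
          funext v; ring
        rw [heq2, integral_const_mul, hvK0, mul_zero]
      rw [e1, e2]
      ring
    rw [hJ2x]
    have hb1 : |∫ v, K v * Rv v| ≤ ∫ v, (M / 2 * h ^ 2) * (v ^ 2 * K v) := by
      have h0 : |∫ v, K v * Rv v| ≤ ∫ v, |K v * Rv v| := by
        have hni := norm_integral_le_integral_norm (μ := (volume : Measure ℝ))
          (fun v => K v * Rv v)
        simp only [Real.norm_eq_abs] at hni
        exact hni
      refine le_trans h0 ?_
      refine integral_mono hI4.abs (hv2Kint.const_mul _) (fun v => ?_)
      rw [abs_mul, abs_of_nonneg (hKnn v)]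
      calc K v * |Rv v| ≤ K v * (M / 2 * h ^ 2 * v ^ 2) :=
            mul_le_mul_of_nonneg_left (hRbd v) (hKnn v)
        _ = (M / 2 * h ^ 2) * (v ^ 2 * K v) := by ring
    have hb2 : (∫ v, (M / 2 * h ^ 2) * (v ^ 2 * K v)) = M * κ₂ * h ^ 2 := by
      rw [integral_const_mul, hv2K]
      ring
    calc |q x z + (∫ v, K v * Rv v) - q x z| = |∫ v, K v * Rv v| := by
          congr 1; ring
      _ ≤ M * κ₂ * h ^ 2 := by rw [← hb2]; exact hb1
  -- outer integrals
  set A : ℝ := ∫ u in Set.Ioi (0 : ℝ), K u * J2 (c + h * u) with hAdef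
  set B2 : ℝ := ∫ u in Set.Ioi (0 : ℝ), K u * q (c + h * u) z with hB2def
  have hφ1int : Integrable (fun u => K u * J2 (c + h * u)) := by
    obtain ⟨C, hC⟩ := (isCompact_Icc (a := c - h) (b := c + h)).exists_bound_of_continuousOn
      hJ2cont.continuousOn
    refine integrable_aux (C := B * C)
      (hKmeas.aestronglyMeasurable.mul
        ((hJ2cont.comp (continuous_const.add (continuous_const.mul continuous_id))
          ).aestronglyMeasurable))
      (fun u hu => by rw [hKsupp u hu, zero_mul]) (fun u hu => ?_)
    have hmem : c + h * u ∈ Set.Icc (c - h) (c + h) := by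
      constructor
      · nlinarith [hu.1, hu.2]
      · nlinarith [hu.1, hu.2]
    have := hC _ hmem
    rw [abs_mul, abs_of_nonneg (hKnn u)]
    refine mul_le_mul (hB u) (by simpa [Real.norm_eq_abs] using this) (abs_nonneg _) hB0
  have hφ2int : Integrable (fun u => K u * q (c + h * u) z) := by
    have hcont : Continuous (fun u => q (c + h * u) z) :=
      hQcont.comp ((continuous_const.add (continuous_const.mul continuous_id)).prodMk
        continuous_const)
    obtain ⟨C, hC⟩ := (isCompact_Icc (a := (-1 : ℝ)) (b := 1)).exists_bound_of_continuousOn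
      hcont.continuousOn
    refine integrable_aux (C := B * C) (hKmeas.aestronglyMeasurable.mul hcont.aestronglyMeasurable)
      (fun u hu => by rw [hKsupp u hu, zero_mul]) (fun u hu => ?_)
    have := hC u hu
    rw [abs_mul, abs_of_nonneg (hKnn u)]
    refine mul_le_mul (hB u) (by simpa [Real.norm_eq_abs] using this) (abs_nonneg _) hB0
  -- |A - B2| bound
  have hAB : |A - B2| ≤ M * κ₂ * h ^ 2 * (1 / 2) := by
    have hsub : A - B2 = ∫ u in Set.Ioi (0 : ℝ), K u * (J2 (c + h * u) - q (c + h * u) z) := by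
      rw [hAdef, hB2def, ← integral_sub hφ1int.integrableOn hφ2int.integrableOn]
      congr 1
      funext u
      ring
    rw [hsub]
    have hptbd : ∀ u ∈ Set.Ioi (0 : ℝ),
        |K u * (J2 (c + h * u) - q (c + h * u) z)| ≤ K u * (M * κ₂ * h ^ 2) := by
      intro u hu
      by_cases hu1 : u ≤ 1
      · have hu0 : (0 : ℝ) < u := Set.mem_Ioi.1 hu
        have hg1 : h * u ≤ h := by
          calc h * u ≤ h * 1 := mul_le_mul_of_nonneg_left hu1 hh.le
            _ = h := mul_one h
        have hus : c + h * u ∈ s :=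
          ⟨le_add_of_nonneg_right (mul_nonneg hh.le hu0.le), by linarith⟩
        rw [abs_mul, abs_of_nonneg (hKnn u)]
        exact mul_le_mul_of_nonneg_left (hJ2est _ hus) (hKnn u)
      · have hK0 : K u = 0 := hKsupp u (fun hmem => hu1 hmem.2)
        rw [hK0]
        simp
    calc |∫ u in Set.Ioi (0 : ℝ), K u * (J2 (c + h * u) - q (c + h * u) z)|
        ≤ ∫ u in Set.Ioi (0 : ℝ), |K u * (J2 (c + h * u) - q (c + h * u) z)| := by
          have hni := norm_integral_le_integral_norm (μ := volume.restrict (Set.Ioi (0:ℝ)))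
              (fun u => K u * (J2 (c + h * u) - q (c + h * u) z))
          simp only [Real.norm_eq_abs] at hni
          exact hni
      _ ≤ ∫ u in Set.Ioi (0 : ℝ), K u * (M * κ₂ * h ^ 2) := by
          refine setIntegral_mono_on ?_ ?_ measurableSet_Ioi (fun u hu => hptbd u hu)
          · exact ((hφ1int.sub hφ2int).abs.congr (Filter.Eventually.of_forall fun u => by
              simp only [Pi.sub_apply]
              congr 1
              ring)).integrableOn
          · exact (hKint.mul_const _).integrableOn
      _ = (∫ u in Set.Ioi (0 : ℝ), K u) * (M * κ₂ * h ^ 2) := integral_mul_const _ _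
      _ = M * κ₂ * h ^ 2 * (1 / 2) := by rw [hKhalf]; ring
  -- B2 Taylor expansion
  have hfc : q c z = p c z := hqp c hcs z
  have htayX : ∀ u : ℝ, 0 < u → u ≤ 1 →
      |q (c + h * u) z - q c z - h * u * d| ≤ M / 2 * h ^ 2 * u ^ 2 := by
    intro u hu0 hu1
    have hg1 : h * u ≤ h := by
      calc h * u ≤ h * 1 := mul_le_mul_of_nonneg_left hu1 hh.le
        _ = h := mul_one h
    have hus : c + h * u ∈ s :=
      ⟨le_add_of_nonneg_right (mul_nonneg hh.le hu0.le), by linarith⟩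
    have := taylor_aux (convex_Icc c (c + δ)) hX1 hX2 hX3 hcs hus
    calc |q (c + h * u) z - q c z - h * u * d|
        = |q (c + h * u) z - q c z - (c + h * u - c) * d| := by
          congr 2
          ring
      _ ≤ M / 2 * (c + h * u - c) ^ 2 := this
      _ = M / 2 * h ^ 2 * u ^ 2 := by ring
  set R2 : ℝ → ℝ := fun u => q (c + h * u) z - q c z - h * u * d with hR2def
  have hKR2int : Integrable (fun u => K u * R2 u) := by
    have heq : (fun u => K u * R2 u)
        = fun u => K u * q (c + h * u) z - K u * q c z - (h * d) * (u * K u) := by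
      funext u
      rw [hR2def]
      ring
    rw [heq]
    exact (hφ2int.sub (hKint.mul_const _)).sub (hvKint.const_mul _)
  have hB2eq : B2 = q c z * (1 / 2) + h * d * κ₁ + ∫ u in Set.Ioi (0 : ℝ), K u * R2 u := by
    have heq : (fun u => K u * q (c + h * u) z)
        = fun u => K u * q c z + (h * d) * (u * K u) + K u * R2 u := by
      funext u
      rw [hR2def]
      ring
    have ha1 : IntegrableOn (fun u => K u * q c z) (Set.Ioi (0:ℝ)) :=
      (hKint.mul_const _).integrableOn
    have ha2 : IntegrableOn (fun u => (h * d) * (u * K u)) (Set.Ioi (0:ℝ)) :=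
      (hvKint.const_mul _).integrableOn
    have ha12 : IntegrableOn (fun u => K u * q c z + (h * d) * (u * K u)) (Set.Ioi (0:ℝ)) :=
      ha1.add ha2
    rw [hB2def]
    rw [heq]
    rw [integral_add ha12 hKR2int.integrableOn, integral_add ha1 ha2]
    have e1 : (∫ u in Set.Ioi (0 : ℝ), K u * q c z) = q c z * (1 / 2) := by
      rw [integral_mul_const, hKhalf]
      ring
    have e2 : (∫ u in Set.Ioi (0 : ℝ), (h * d) * (u * K u)) = h * d * κ₁ := by
      rw [integral_const_mul, ← hκ₁def]
    rw [e1, e2]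
  have hE2 : |∫ u in Set.Ioi (0 : ℝ), K u * R2 u| ≤ M / 2 * h ^ 2 * κ₂ := by
    have hptbd : ∀ u ∈ Set.Ioi (0 : ℝ),
        |K u * R2 u| ≤ (M / 2 * h ^ 2) * (u ^ 2 * K u) := by
      intro u hu
      by_cases hu1 : u ≤ 1
      · rw [abs_mul, abs_of_nonneg (hKnn u)]
        calc K u * |R2 u| ≤ K u * (M / 2 * h ^ 2 * u ^ 2) :=
              mul_le_mul_of_nonneg_left (htayX u (Set.mem_Ioi.1 hu) hu1) (hKnn u)
          _ = (M / 2 * h ^ 2) * (u ^ 2 * K u) := by ring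
      · have hK0 : K u = 0 := hKsupp u (fun hmem => hu1 hmem.2)
        rw [hK0]
        simp
    calc |∫ u in Set.Ioi (0 : ℝ), K u * R2 u|
        ≤ ∫ u in Set.Ioi (0 : ℝ), |K u * R2 u| := by
          have hni := norm_integral_le_integral_norm (μ := volume.restrict (Set.Ioi (0:ℝ)))
              (fun u => K u * R2 u)
          simp only [Real.norm_eq_abs] at hni
          exact hni
      _ ≤ ∫ u in Set.Ioi (0 : ℝ), (M / 2 * h ^ 2) * (u ^ 2 * K u) := by
          refine setIntegral_mono_on hKR2int.abs.integrableOn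
            ((hv2Kint.const_mul _).integrableOn) measurableSet_Ioi hptbd
      _ = (M / 2 * h ^ 2) * κ₂ := by rw [integral_const_mul, ← hκ₂def]
      _ = M / 2 * h ^ 2 * κ₂ := by ring
  -- put everything together
  have hmain : (2 / h ^ 2) * (∫ x in Set.Ioi c, ∫ w, K ((x - c) / h) * K ((z - w) / h) * p x w)
      = 2 * A := by
    rw [hLHS, hout]
    have heq : (fun u => K u * (h * J2 (c + h * u)))
        = fun u => h * (K u * J2 (c + h * u)) := by
      funext u
      ring
    rw [heq, integral_const_mul, hAdef]
    field_simp
  rw [hmain, hdW]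
  have hsplit2 : 2 * A - p c z - 2 * κ₁ * h * d
      = 2 * (A - B2) + 2 * (∫ u in Set.Ioi (0 : ℝ), K u * R2 u) := by
    rw [hB2eq, hfc]
    ring
  rw [hsplit2]
  have hk1sq : 0 ≤ κ₁ ^ 2 := sq_nonneg κ₁
  have hh2 : 0 ≤ h ^ 2 := sq_nonneg h
  calc |2 * (A - B2) + 2 * (∫ u in Set.Ioi (0 : ℝ), K u * R2 u)|
      ≤ 2 * |A - B2| + 2 * |∫ u in Set.Ioi (0 : ℝ), K u * R2 u| := by
        calc |2 * (A - B2) + 2 * (∫ u in Set.Ioi (0 : ℝ), K u * R2 u)|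
            ≤ |2 * (A - B2)| + |2 * (∫ u in Set.Ioi (0 : ℝ), K u * R2 u)| := abs_add_le _ _
          _ = 2 * |A - B2| + 2 * |∫ u in Set.Ioi (0 : ℝ), K u * R2 u| := by
              rw [abs_mul, abs_mul]
              norm_num
    _ ≤ 2 * (M * κ₂ * h ^ 2 * (1 / 2)) + 2 * (M / 2 * h ^ 2 * κ₂) := by
        have := hAB
        have := hE2
        gcongr
    _ ≤ M * (2 * κ₂ + 4 * κ₁ ^ 2) * h ^ 2 := by
        have hfin : M * (2 * κ₂ + 4 * κ₁ ^ 2) * h ^ 2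
            = 2 * (M * κ₂ * h ^ 2 * (1 / 2)) + 2 * (M / 2 * h ^ 2 * κ₂)
              + 4 * (M * κ₁ ^ 2 * h ^ 2) := by ring
        have hnn : 0 ≤ M * κ₁ ^ 2 * h ^ 2 :=
          mul_nonneg (mul_nonneg hM hk1sq) hh2
        linarith
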